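/- arXiv:2506.19493 — 2 statements merged into one kernel-verified Lean document; each statement's English description precedes it below -/
import Mathlib

section
/- A graph is k-representable if and only if it is represented by some word w with |w|_a ≤ k for every letter a in alph(w). -/
open List

variable {α : Type*} [DecidableEq α]

/-- Two distinct letters `a` and `b` alternate in the word `w`:
their projection is an alternating sequence of `a`s and `b`s, both occurring. -/
def Alt (w : List α) (a b : α) : Prop :=
  a ≠ b ∧ a ∈ w ∧ b ∈ w ∧
    (w.filter (fun x => decide (x = a ∨ x = b))).Chain' (· ≠ ·)

/-- The word `w` represents the graph `G` with vertex set `V`: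
the alphabet of `w` is `V` and adjacency coincides with alternation. -/
def Represents (w : List α) (V : Finset α) (G : SimpleGraph α) : Prop :=
  w.toFinset = V ∧ ∀ a b : α, G.Adj a b ↔ Alt w a b

/-- A word is `k`-uniform if every letter of its alphabet occurs exactly `k` times. -/
def KUniform (k : ℕ) (w : List α) : Prop :=
  ∀ a ∈ w, w.count a = k

/-- Number of maximal blocks of `true`s in a boolean word. -/
def blockCount (l : List Bool) : ℕ :=
  ((l.zip (false :: l)).filter (fun p => p.1 && !p.2)).length

/-- `w` is `k`-local witnessed by the marking sequence `σ`. -/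
def KLocalWith (k : ℕ) (w σ : List α) : Prop :=
  σ.Nodup ∧ σ.toFinset = w.toFinset ∧
    ∀ i : ℕ, blockCount (w.map (fun x => decide (x ∈ σ.take i))) ≤ k

/-- `w` is `k`-local: some marking sequence witnesses `k`-locality. -/
def KLocal (k : ℕ) (w : List α) : Prop := ∃ σ : List α, KLocalWith k w σ

/-- The subgraph of `G` induced by `U` (as a graph on the same ambient type). -/
def inducedOn (G : SimpleGraph α) (U : Finset α) : SimpleGraph α where
  Adj a b := G.Adj a b ∧ a ∈ U ∧ b ∈ U
  symm := by
    constructor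
    intro a b h
    exact ⟨h.1.symm, h.2.2, h.2.1⟩
  loopless := by
    constructor
    intro a h
    exact G.irrefl h.1

/-- Add a vertex `v` dominating the vertex set `V` to the graph `G`. -/
def addDom (G : SimpleGraph α) (V : Finset α) (v : α) : SimpleGraph α where
  Adj a b := G.Adj a b ∨ (a = v ∧ b ∈ V ∧ b ≠ v) ∨ (b = v ∧ a ∈ V ∧ a ≠ v)
  symm := by
    constructor
    intro a b h
    rcases h with h | h | h
    · exact Or.inl h.symm
    · exact Or.inr (Or.inr h)
    · exact Or.inr (Or.inl h)
  loopless := by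
    constructor
    intro a h
    rcases h with h | h | h
    · exact G.irrefl h
    · exact h.2.2 h.1
    · exact h.2.2 h.1

/-- Threshold graphs (with explicit vertex set): built from the empty graph
by repeatedly adding isolated or dominating vertices. -/
inductive IsThreshold : SimpleGraph α → Finset α → Prop
  | empty : IsThreshold ⊥ ∅
  | isolated {G V v} (hv : v ∉ V) (h : IsThreshold G V) : IsThreshold G (insert v V)
  | dominating {G V v} (hv : v ∉ V) (h : IsThreshold G V) :
      IsThreshold (addDom G V v) (insert v V)

/-- Clique-width expressions over label type `L` and vertex type `α`. -/
inductive CWExpr (L α : Type*) where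
  | vertex : L → α → CWExpr L α
  | union : CWExpr L α → CWExpr L α → CWExpr L α
  | connect : L → L → CWExpr L α → CWExpr L α
  | relabel : L → L → CWExpr L α → CWExpr L α

/-- The graph of all edges between label `i` and label `j` within `V` under labelling `f`. -/
def connGraph {L : Type*} [DecidableEq L] (V : Finset α) (f : α → L) (i j : L) :
    SimpleGraph α where
  Adj a b := a ≠ b ∧ a ∈ V ∧ b ∈ V ∧ ((f a = i ∧ f b = j) ∨ (f a = j ∧ f b = i))
  symm := by
    constructor
    intro a b h
    rcases h.2.2.2 with h4 | h4
    · exact ⟨h.1.symm, h.2.2.1, h.2.1, Or.inr ⟨h4.2, h4.1⟩⟩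
    · exact ⟨h.1.symm, h.2.2.1, h.2.1, Or.inl ⟨h4.2, h4.1⟩⟩
  loopless := by
    constructor
    intro a h
    exact h.1 rfl

/-- `Builds e V f G`: the clique-width expression `e` builds the labelled graph
with vertex set `V`, labelling `f` and edge structure `G`. -/
inductive Builds {L : Type*} [DecidableEq L] : CWExpr L α → Finset α → (α → L) → SimpleGraph α → Prop
  | vertex (l : L) (v : α) : Builds (.vertex l v) {v} (fun _ => l) ⊥
  | union {e₁ e₂ V₁ V₂ f₁ f₂ G₁ G₂} (h₁ : Builds e₁ V₁ f₁ G₁) (h₂ : Builds e₂ V₂ f₂ G₂)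
      (hd : _root_.Disjoint V₁ V₂) :
      Builds (.union e₁ e₂) (V₁ ∪ V₂) (fun x => if x ∈ V₁ then f₁ x else f₂ x) (G₁ ⊔ G₂)
  | connect {e V f G} (i j : L) (hij : i ≠ j) (h : Builds e V f G) :
      Builds (.connect i j e) V f (G ⊔ connGraph V f i j)
  | relabel {e V f G} (i j : L) (h : Builds e V f G) :
      Builds (.relabel i j e) V (fun x => if f x = i then j else f x) G

/-- The clique-width of `G` (with vertex set `V`) is at most `k`. -/
def CliqueWidthLE (k : ℕ) (G : SimpleGraph α) (V : Finset α) : Prop :=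
  ∃ (e : CWExpr (Fin k) α) (f : α → Fin k), Builds e V f G

/-- The crown graph `H_{n,n}`: complete bipartite minus a perfect matching. -/
def crown (n : ℕ) : SimpleGraph (Fin n ⊕ Fin n) where
  Adj a b :=
    match a, b with
    | .inl x, .inr y => x ≠ y
    | .inr x, .inl y => x ≠ y
    | _, _ => False
  symm := by
    constructor
    intro a b h
    cases a <;> cases b <;> simp_all
    · exact fun hc => h hc.symm
    · exact fun hc => h hc.symm
  loopless := by
    constructor
    intro a h
    cases a <;> simp_all

/-- The disjoint-union-of-cliques graph associated with a partition `P` of `[n]`. -/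
def partGraph {n : ℕ} (P : Finpartition (Finset.univ : Finset (Fin n))) :
    SimpleGraph (Fin n) where
  Adj x y := x ≠ y ∧ ∃ C ∈ P.parts, x ∈ C ∧ y ∈ C
  symm := by
    constructor
    intro a b h
    obtain ⟨hne, C, hC, h1, h2⟩ := h
    exact ⟨hne.symm, C, hC, h2, h1⟩
  loopless := by
    constructor
    intro a h
    exact h.1 rfl

/-- The word associated with a partition: each block written twice in a row. -/
noncomputable def partWord {n : ℕ} (P : Finpartition (Finset.univ : Finset (Fin n))) : List (Fin n) :=
  (P.parts.toList.map (fun C => C.toList ++ C.toList)).flatten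


def myFo : List α → List α
  | [] => []
  | x :: t => x :: myFo (t.filter (fun y => decide (y ≠ x)))
termination_by l => l.length
decreasing_by simpa using Nat.lt_succ_of_le ((List.length_filter_le _ t.attach).trans_eq List.length_attach)

theorem mem_myFo (w : List α) (a : α) : a ∈ myFo w ↔ a ∈ w := by
  induction w using myFo.induct with
  | case1 => simp [myFo]
  | case2 x t ih =>
    rw [List.unattach_filter (g := fun y => decide (y ≠ x)) (hf := fun _ _ => rfl), List.unattach_attach] at ih
    rw [myFo]
    by_cases hax : a = x
    · simp [hax]
    · simp only [mem_cons, hax, false_or]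
      simp only [mem_filter, decide_eq_true_eq] at ih
      rw [ih]
      simp [hax]

theorem nodup_myFo (w : List α) : (myFo w).Nodup := by
  induction w using myFo.induct with
  | case1 => simp [myFo]
  | case2 x t ih =>
    rw [List.unattach_filter (g := fun y => decide (y ≠ x)) (hf := fun _ _ => rfl), List.unattach_attach] at ih
    rw [myFo]
    refine List.nodup_cons.mpr ⟨?_, ih⟩
    rw [mem_myFo]
    simp

theorem head?_filter_myFo (w : List α) (P : α → Bool) :
    ((myFo w).filter P).head? = (w.filter P).head? := by
  induction w using myFo.induct with
  | case1 => simp [myFo]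
  | case2 x t ih =>
    rw [List.unattach_filter (g := fun y => decide (y ≠ x)) (hf := fun _ _ => rfl), List.unattach_attach] at ih
    rw [myFo]
    by_cases hx : P x
    · simp [hx]
    · simp only [filter_cons, hx, if_neg, Bool.false_eq_true, ite_false]
      rw [ih, filter_filter]
      congr 1
      apply List.filter_congr
      intro y hy
      have : P y → y ≠ x := fun h hc => hx (hc ▸ h)
      by_cases hPy : P y
      · simp [hPy, this hPy]
      · simp [hPy]

theorem count_myFo (w : List α) (a : α) :
    (myFo w).count a = if a ∈ w then 1 else 0 := by
  by_cases h : a ∈ w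
  · rw [if_pos h]
    exact (List.nodup_iff_count_eq_one.mp (nodup_myFo w)) a ((mem_myFo w a).mpr h)
  · rw [if_neg h]
    exact List.count_eq_zero.mpr (fun hc => h ((mem_myFo w a).mp hc))

theorem alt_count : ∀ n : ℕ, ∀ l : List α, l.length ≤ n → ∀ a b : α, a ≠ b →
    (∀ x ∈ l, x = a ∨ x = b) → l.Chain' (· ≠ ·) → l.head? = some a →
    l.count b ≤ l.count a ∧ l.count a ≤ l.count b + 1 := by
  intro n
  induction n with
  | zero =>
    intro l hl
    rw [Nat.le_zero, List.length_eq_zero_iff] at hl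
    subst hl
    intro a b _ _ _ h
    simp at h
  | succ n ih =>
    intro l hl a b hab hmem hchain hhead
    rcases l with _ | ⟨x, l2⟩
    · simp at hhead
    have hx : x = a := by simpa using hhead
    rcases l2 with _ | ⟨y, t⟩
    · rw [hx]
      simp [List.count_cons, hab.symm, hab]
    rw [List.Chain', List.isChain_cons_cons] at hchain
    have hy : y = b := by
      rcases hmem y (by simp) with h | h
      · rw [hx] at hchain
        exact absurd h.symm hchain.1
      · exact h
    rw [hx, hy] at hchain hmem ⊢
    have hlen : (b :: t).length ≤ n := by
      simpa using Nat.le_of_succ_le_succ hl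
    have hmem' : ∀ z ∈ b :: t, z = b ∨ z = a := by
      intro z hz
      exact (hmem z (List.mem_cons_of_mem a hz)).symm
    obtain ⟨h1, h2⟩ := ih (b :: t) hlen b a hab.symm hmem' hchain.2 (by simp)
    have e1 : List.count b (a :: b :: t) = List.count b (b :: t) :=
      List.count_cons_of_ne hab
    have e2 : List.count a (a :: b :: t) = List.count a (b :: t) + 1 :=
      List.count_cons_self
    rw [e1, e2]
    omega

theorem head_of_alt_lt (w : List α) (a b : α) (h : Alt w a b)
    (hlt : w.count a < w.count b) :
    (w.filter (fun x => decide (x = a ∨ x = b))).head? = some b := by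
  obtain ⟨hab, ha, hb, hchain⟩ := h
  set l := w.filter (fun x => decide (x = a ∨ x = b)) with hl
  have hbl : b ∈ l := List.mem_filter.mpr ⟨hb, by simp⟩
  have hne : l ≠ [] := List.ne_nil_of_mem hbl
  obtain ⟨c, t, hct⟩ := List.exists_cons_of_ne_nil hne
  have hcl : c ∈ l := by rw [hct]; simp
  have hc : c = a ∨ c = b := by
    have := (List.mem_filter.mp hcl).2
    simpa using this
  have hca : l.count a = w.count a := List.count_filter (by simp)
  have hcb : l.count b = w.count b := List.count_filter (by simp)
  rcases hc with rfl | rfl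
  · exfalso
    have hmem : ∀ x ∈ l, x = c ∨ x = b := by
      intro x hx
      have := (List.mem_filter.mp hx).2
      simpa using this
    have := alt_count l.length l le_rfl c b hab hmem hchain (by rw [hct]; rfl)
    omega
  · rw [hct]; rfl

theorem alt_comm (l : List α) (a b : α) (h : Alt l a b) : Alt l b a := by
  obtain ⟨hab, ha, hb, hchain⟩ := h
  refine ⟨hab.symm, hb, ha, ?_⟩
  have : l.filter (fun x => decide (x = b ∨ x = a)) =
      l.filter (fun x => decide (x = a ∨ x = b)) :=
    List.filter_congr (fun x _ => decide_eq_decide.mpr or_comm)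
  rw [this]
  exact hchain

section Step

variable (k : ℕ) (w : List α)

/-- The prefix word: one copy of each deficient letter, in order of first occurrence. -/
def defPre : List α := (myFo w).filter (fun x => decide (w.count x < k))

theorem mem_defPre (x : α) : x ∈ defPre k w ↔ x ∈ w ∧ w.count x < k := by
  unfold defPre
  rw [List.mem_filter, mem_myFo]
  simp

theorem count_defPre (x : α) :
    (defPre k w).count x = if x ∈ w ∧ w.count x < k then 1 else 0 := by
  by_cases h : x ∈ w ∧ w.count x < k
  · rw [if_pos h]
    exact (List.nodup_iff_count_eq_one.mp ((nodup_myFo w).filter _)) x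
      ((mem_defPre k w x).mpr h)
  · rw [if_neg h]
    exact List.count_eq_zero.mpr (fun hc => h ((mem_defPre k w x).mp hc))

theorem alt_ext_head (hcount : ∀ x ∈ w, w.count x ≤ k) (a b : α)
    (hAlt : Alt w a b)
    (hhead : (w.filter (fun x => decide (x = a ∨ x = b))).head? = some a) :
    Alt (defPre k w ++ w) a b := by
  obtain ⟨hab, ha, hb, hchain⟩ := hAlt
  set P : α → Bool := fun x => decide (x = a ∨ x = b) with hP
  set p : List α := defPre k w with hp
  refine ⟨hab, List.mem_append_right _ ha, List.mem_append_right _ hb, ?_⟩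
  rw [List.filter_append]
  rcases hbp : decide (b ∈ w ∧ w.count b < k) with _ | _
  · -- b not deficient
    rcases hap : decide (a ∈ w ∧ w.count a < k) with _ | _
    · -- neither deficient: prefix filter is empty
      have : p.filter P = [] := by
        rw [List.filter_eq_nil_iff]
        intro x hx hPx
        have hx' := (mem_defPre k w x).mp hx
        have : x = a ∨ x = b := by simpa [hP] using hPx
        rcases this with rfl | rfl
        · simp [hx'] at hap
        · simp [hx'] at hbp
      rw [this, List.nil_append]
      exact hchain
    · -- a deficient, b not: contradiction with hhead
      exfalso
      have hap' : a ∈ w ∧ w.count a < k := by simpa using hap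
      have hbk : w.count b = k := by
        have h1 := hcount b hb
        have h2 : ¬ (b ∈ w ∧ w.count b < k) := by simpa using hbp
        have h2' : ¬ w.count b < k := fun hc => h2 ⟨hb, hc⟩
        omega
      have hlt : w.count a < w.count b := by omega
      have := head_of_alt_lt w a b ⟨hab, ha, hb, hchain⟩ hlt
      rw [hhead] at this
      exact hab (Option.some_injective _ this)
  · -- b deficient
    have hbp' : b ∈ w ∧ w.count b < k := by simpa using hbp
    rcases hap : decide (a ∈ w ∧ w.count a < k) with _ | _
    · -- only b deficient: prefix filter is [b]
      have hmemb : ∀ x ∈ p.filter P, x = b := by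
        intro x hx
        rw [List.mem_filter] at hx
        have hx1 := (mem_defPre k w x).mp hx.1
        have : x = a ∨ x = b := by simpa [hP] using hx.2
        rcases this with rfl | rfl
        · simp [hx1] at hap
        · rfl
      have hcb : (p.filter P).count b = 1 := by
        rw [hP, List.count_filter (by simp)]
        rw [hp, count_defPre, if_pos hbp']
      have hrep := List.eq_replicate_length.mpr hmemb
      have hlen : (p.filter P).length = 1 := by
        have := List.count_replicate_self (a := b) (n := (p.filter P).length)
        rw [← hrep] at this
        omega
      have : p.filter P = [b] := by
        rw [hrep, hlen]
        rfl
      rw [this]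
      rw [List.Chain', List.isChain_append]
      refine ⟨List.isChain_singleton b, hchain, ?_⟩
      intro x hx y hy
      simp only [List.getLast?_singleton, Option.mem_some_iff] at hx
      rw [hhead] at hy
      simp only [Option.mem_some_iff] at hy
      rw [← hx, ← hy]
      exact hab.symm
    · -- both deficient: prefix filter is [a, b]
      have hap' : a ∈ w ∧ w.count a < k := by simpa using hap
      -- head of the prefix filter equals head of the word filter
      have hfp : p.filter P = (myFo w).filter P := by
        rw [hp]
        unfold defPre
        rw [List.filter_filter]
        apply List.filter_congr
        intro x hx
        by_cases hPx : P x = true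
        · have : x = a ∨ x = b := by simpa [hP] using hPx
          have hxw : x ∈ w := (mem_myFo w x).mp hx
          have : w.count x < k := by rcases this with rfl | rfl; exacts [hap'.2, hbp'.2]
          simp [hPx, this]
        · simp [hPx]
      have hheadp : (p.filter P).head? = some a := by
        rw [hfp, head?_filter_myFo]
        exact hhead
      obtain ⟨c, r, hcr⟩ : ∃ c r, p.filter P = c :: r := by
        rcases hq : p.filter P with _ | ⟨c, r⟩
        · rw [hq] at hheadp; simp at hheadp
        · exact ⟨c, r, rfl⟩
      have hc : c = a := by
        rw [hcr] at hheadp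
        simpa using hheadp
      subst hc
      have hca : (p.filter P).count c = 1 := by
        rw [hP, List.count_filter (by simp)]
        rw [hp, count_defPre, if_pos hap']
      have hcb : (p.filter P).count b = 1 := by
        rw [hP, List.count_filter (by simp)]
        rw [hp, count_defPre, if_pos hbp']
      have hcnr : List.count c r = 0 := by
        rw [hcr, List.count_cons_self] at hca
        omega
      have hbr : List.count b r = 1 := by
        rw [hcr, List.count_cons_of_ne hab] at hcb
        exact hcb
      have hmemr : ∀ x ∈ r, x = b := by
        intro x hx
        have hxPf : x ∈ p.filter P := by rw [hcr]; exact List.mem_cons_of_mem _ hx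
        have : x = c ∨ x = b := by
          have := (List.mem_filter.mp hxPf).2
          simpa [hP] using this
        rcases this with rfl | rfl
        · exact absurd hx (List.count_eq_zero.mp hcnr)
        · rfl
      have hrrep := List.eq_replicate_length.mpr hmemr
      have hrlen : r.length = 1 := by
        have := List.count_replicate_self (a := b) (n := r.length)
        rw [← hrrep] at this
        omega
      have hr : r = [b] := by rw [hrrep, hrlen]; rfl
      rw [hcr, hr]
      rw [List.Chain', List.isChain_append]
      refine ⟨List.isChain_pair.mpr hab, hchain, ?_⟩
      intro x hx y hy
      have hx' : x = b := Eq.symm (by simpa using hx)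
      rw [hhead] at hy
      simp only [Option.mem_some_iff] at hy
      rw [hx', ← hy]
      exact hab.symm

theorem alt_ext (hcount : ∀ x ∈ w, w.count x ≤ k) (a b : α) :
    Alt (defPre k w ++ w) a b ↔ Alt w a b := by
  constructor
  · rintro ⟨hab, ha, hb, hchain⟩
    have hmw : ∀ x : α, x ∈ defPre k w ++ w → x ∈ w := by
      intro x hx
      rcases List.mem_append.mp hx with hx | hx
      · exact ((mem_defPre k w x).mp hx).1
      · exact hx
    refine ⟨hab, hmw a ha, hmw b hb, ?_⟩
    rw [List.filter_append] at hchain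
    exact hchain.right_of_append
  · intro hAlt
    have hne : (w.filter (fun x => decide (x = a ∨ x = b))) ≠ [] :=
      List.ne_nil_of_mem (List.mem_filter.mpr ⟨hAlt.2.1, by simp⟩)
    obtain ⟨c, t, hct⟩ := List.exists_cons_of_ne_nil hne
    have hcmem : c = a ∨ c = b := by
      have : c ∈ w.filter (fun x => decide (x = a ∨ x = b)) := by rw [hct]; simp
      simpa using (List.mem_filter.mp this).2
    rcases hcmem with rfl | rfl
    · exact alt_ext_head k w hcount c b hAlt (by rw [hct]; rfl)
    · apply alt_comm
      have hAlt' := alt_comm w a c hAlt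
      apply alt_ext_head k w hcount c a hAlt'
      have : w.filter (fun x => decide (x = c ∨ x = a)) =
          w.filter (fun x => decide (x = a ∨ x = c)) :=
        List.filter_congr (fun x _ => decide_eq_decide.mpr or_comm)
      rw [this, hct]
      rfl

end Step

theorem main_uniform (k : ℕ) : ∀ n : ℕ, ∀ w : List α,
    (∀ x ∈ w, w.count x ≤ k) →
    (∑ x ∈ w.toFinset, (k - w.count x)) ≤ n →
    ∃ w' : List α, KUniform k w' ∧ w'.toFinset = w.toFinset ∧
      ∀ a b : α, Alt w' a b ↔ Alt w a b := by
  intro n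
  induction n with
  | zero =>
    intro w hc hsum
    refine ⟨w, ?_, rfl, fun _ _ => Iff.rfl⟩
    intro a ha
    have h1 := Finset.sum_eq_zero_iff.mp (Nat.le_zero.mp hsum) a (List.mem_toFinset.mpr ha)
    have h2 := hc a ha
    omega
  | succ n ih =>
    intro w hc hsum
    by_cases hall : ∀ x ∈ w, w.count x = k
    · exact ⟨w, hall, rfl, fun _ _ => Iff.rfl⟩
    · push_neg at hall
      obtain ⟨x0, hx0w, hx0⟩ := hall
      have hx0lt : w.count x0 < k := lt_of_le_of_ne (hc x0 hx0w) hx0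
      set w2 := defPre k w ++ w with hw2
      have hmemw2 : ∀ x : α, x ∈ w2 ↔ x ∈ w := by
        intro x
        rw [hw2, List.mem_append, mem_defPre]
        constructor
        · rintro (h | h); exacts [h.1, h]
        · exact Or.inr
      have hfin : w2.toFinset = w.toFinset := by
        ext x; simp only [List.mem_toFinset]; exact hmemw2 x
      have hcnt : ∀ x : α, w2.count x = (if x ∈ w ∧ w.count x < k then 1 else 0) + w.count x := by
        intro x
        rw [hw2, List.count_append, count_defPre]
      have hc2 : ∀ x ∈ w2, w2.count x ≤ k := by
        intro x hx
        have hxw := (hmemw2 x).mp hx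
        rw [hcnt]
        by_cases h : x ∈ w ∧ w.count x < k
        · rw [if_pos h]; omega
        · rw [if_neg h]
          simpa using hc x hxw
      have hsum2 : (∑ x ∈ w2.toFinset, (k - w2.count x)) ≤ n := by
        rw [hfin]
        have hlt : (∑ x ∈ w.toFinset, (k - w2.count x)) < ∑ x ∈ w.toFinset, (k - w.count x) := by
          apply Finset.sum_lt_sum
          · intro i _
            rw [hcnt]
            omega
          · refine ⟨x0, List.mem_toFinset.mpr hx0w, ?_⟩
            rw [hcnt, if_pos ⟨hx0w, hx0lt⟩]
            omega
        omega
      obtain ⟨w', h1, h2, h3⟩ := ih w2 hc2 hsum2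
      exact ⟨w', h1, h2.trans hfin, fun a b => (h3 a b).trans (alt_ext k w hc a b)⟩

/-- A graph is `k`-representable iff it is represented by a word
with at most `k` occurrences of each letter. -/
theorem stmt1 {α : Type*} [DecidableEq α] (k : ℕ) (hk : 1 ≤ k)
    (V : Finset α) (G : SimpleGraph α) :
    (∃ w : List α, KUniform k w ∧ Represents w V G) ↔
      (∃ w : List α, (∀ a ∈ w, w.count a ≤ k) ∧ Represents w V G) := by
  constructor
  · rintro ⟨w, hu, hrep⟩
    exact ⟨w, fun a ha => (hu a ha).le, hrep⟩
  · rintro ⟨w, hcnt, hrep⟩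
    obtain ⟨w', h1, h2, h3⟩ := main_uniform k _ w hcnt le_rfl
    exact ⟨w', h1, h2.trans hrep.1, fun a b => (hrep.2 a b).trans (h3 a b).symm⟩
end

section
/- For k > 1, the number of graphs on vertex set [n] representable by k-local words is at least the n-th Bell number B_n. -/
open List

variable {α : Type*} [DecidableEq α]

def bcAux : Bool → List Bool → ℕ
  | _, [] => 0
  | p, b :: l => (if b && !p then 1 else 0) + bcAux b l

lemma bcAux_eq (p : Bool) (l : List Bool) :
    ((l.zip (p :: l)).filter (fun q => q.1 && !q.2)).length = bcAux p l := by
  induction l generalizing p with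
  | nil => simp [bcAux]
  | cons b l ih =>
    simp only [zip_cons_cons, filter_cons, bcAux, ← ih b]
    by_cases h : b && !p <;> simp [h] <;> omega

lemma blockCount_eq_bcAux (l : List Bool) : blockCount l = bcAux false l :=
  bcAux_eq false l

lemma bcAux_le_false (p : Bool) (l : List Bool) : bcAux p l ≤ bcAux false l := by
  cases l with
  | nil => simp [bcAux]
  | cons b l =>
    simp only [bcAux]
    have : (if (b && !p) = true then 1 else 0) ≤ (if (b && !false) = true then 1 else 0) := by
      cases b <;> cases p <;> simp
    omega

lemma bcAux_append (p : Bool) (l1 l2 : List Bool) :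
    bcAux p (l1 ++ l2) ≤ bcAux p l1 + bcAux false l2 := by
  induction l1 generalizing p with
  | nil => simpa [bcAux] using bcAux_le_false p l2
  | cons b l ih =>
    simp only [cons_append, bcAux, List.append_eq] at *
    have := ih b
    omega

lemma bcAux_all_true {l : List Bool} (h : ∀ b ∈ l, b = true) : bcAux true l = 0 := by
  induction l with
  | nil => rfl
  | cons b l ih =>
    have hb : b = true := h b (mem_cons_self ..)
    subst hb
    simp [bcAux, ih fun x hx => h x (mem_cons_of_mem _ hx)]

lemma bcAux_le_one {l : List Bool} (p : Bool) (h : ∀ b ∈ l, b = true) : bcAux p l ≤ 1 := by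
  cases l with
  | nil => simp [bcAux]
  | cons b l =>
    have hb : b = true := h b (mem_cons_self ..)
    subst hb
    simp only [bcAux, bcAux_all_true fun x hx => h x (mem_cons_of_mem _ hx)]
    split <;> omega

lemma bcAux_all_false {l : List Bool} (p : Bool) (h : ∀ b ∈ l, b = false) : bcAux p l = 0 := by
  induction l generalizing p with
  | nil => rfl
  | cons b l ih =>
    have hb : b = false := h b (mem_cons_self ..)
    subst hb
    simp [bcAux, ih false fun x hx => h x (mem_cons_of_mem _ hx)]

lemma bcAux_true_append {l1 l2 : List Bool} (h : ∀ b ∈ l1, b = true) :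
    bcAux true (l1 ++ l2) = bcAux true l2 := by
  induction l1 with
  | nil => rfl
  | cons b l ih =>
    have hb : b = true := h b (mem_cons_self ..)
    subst hb
    simp [bcAux, ih fun x hx => h x (mem_cons_of_mem _ hx)]

lemma bcAux_false_le (l : List Bool) : bcAux false l ≤ 1 + bcAux true l := by
  cases l with
  | nil => simp [bcAux]
  | cons b l => cases b <;> simp [bcAux]


lemma key_le_one (L : List (List α)) (hnd : L.flatten.Nodup) (i : ℕ) :
    bcAux true (((L.map (fun C => C ++ C)).flatten).map
      (fun x => decide (x ∈ L.flatten.take i))) ≤ 1 := by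
  induction L generalizing i with
  | nil => simp [bcAux]
  | cons C L ih =>
    simp only [flatten_cons, map_cons] at hnd ⊢
    rw [nodup_append] at hnd
    obtain ⟨hC, hF, hdisj⟩ := hnd
    set F := L.flatten with hFdef
    set W := (L.map fun C => C ++ C).flatten with hWdef
    have hWF : ∀ x ∈ W, x ∈ F := by
      intro x hx
      rw [mem_flatten] at hx ⊢
      obtain ⟨l, hl, hxl⟩ := hx
      rw [mem_map] at hl
      obtain ⟨D, hD, rfl⟩ := hl
      exact ⟨D, hD, by simpa using (mem_append.1 hxl).elim id id⟩
    by_cases hi : i ≤ C.length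
    · have ht : (C ++ F).take i = C.take i := take_append_of_le_length hi
      set χ : α → Bool := fun x => decide (x ∈ (C ++ F).take i) with hχ
      have hCsplit : C.map χ = (C.take i).map χ ++ (C.drop i).map χ := by
        rw [← map_append, take_append_drop]
      have hT : ∀ b ∈ (C.take i).map χ, b = true := by
        intro b hb
        rw [mem_map] at hb
        obtain ⟨x, hx, rfl⟩ := hb
        simp [hχ, ht, hx]
      have hCnd := hC
      rw [← take_append_drop i C, nodup_append] at hCnd
      have hD : ∀ b ∈ (C.drop i).map χ, b = false := by
        intro b hb
        rw [mem_map] at hb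
        obtain ⟨x, hx, rfl⟩ := hb
        have hxn : x ∉ C.take i := fun hc => hCnd.2.2 _ hc _ hx rfl
        simp [hχ, ht, hxn]
      have hWm : ∀ b ∈ W.map χ, b = false := by
        intro b hb
        rw [mem_map] at hb
        obtain ⟨x, hx, rfl⟩ := hb
        have hxC : x ∉ C.take i := fun hc => hdisj _ (mem_of_mem_take hc) _ (hWF x hx) rfl
        simp [hχ, ht, hxC]
      rw [map_append, map_append, hCsplit]
      rw [append_assoc, append_assoc, bcAux_true_append hT]
      calc bcAux true ((C.drop i).map χ ++ (((C.take i).map χ ++ (C.drop i).map χ) ++ W.map χ))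
          ≤ bcAux true ((C.drop i).map χ) +
            bcAux false (((C.take i).map χ ++ (C.drop i).map χ) ++ W.map χ) := bcAux_append ..
        _ ≤ 0 + (bcAux false ((C.take i).map χ ++ (C.drop i).map χ) + bcAux false (W.map χ)) := by
            gcongr
            · exact le_of_eq (bcAux_all_false _ hD)
            · exact bcAux_append ..
        _ ≤ 1 := by
            have h1 := bcAux_append false ((C.take i).map χ) ((C.drop i).map χ)
            have h2 := bcAux_le_one false hT
            have h3 := bcAux_all_false false hD
            have h4 := bcAux_all_false false hWm
            omega
    · push_neg at hi
      have ht : (C ++ F).take i = C ++ F.take (i - C.length) := by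
        rw [take_append, take_of_length_le hi.le]
      set χ : α → Bool := fun x => decide (x ∈ (C ++ F).take i) with hχ
      have hCC : ∀ b ∈ (C ++ C).map χ, b = true := by
        intro b hb
        rw [mem_map] at hb
        obtain ⟨x, hx, rfl⟩ := hb
        have : x ∈ C := by simpa using (mem_append.1 hx).elim id id
        simp [hχ, ht, this]
      rw [map_append, bcAux_true_append hCC]
      have : W.map χ = W.map (fun x => decide (x ∈ F.take (i - C.length))) := by
        apply map_congr_left
        intro x hx
        have hxF := hWF x hx
        have hxC : x ∉ C := fun hc => hdisj _ hc _ hxF rfl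
        simp [hχ, ht, hxC]
      rw [this]
      exact ih hF _


section PartHelpers
variable {n : ℕ} (P : Finpartition (Finset.univ : Finset (Fin n)))

/-- The blocks of `P` as lists. -/
noncomputable def partBlocks : List (List (Fin n)) := P.parts.toList.map Finset.toList

lemma partBlocks_flatten_nodup : (partBlocks P).flatten.Nodup := by
  rw [List.nodup_flatten]
  constructor
  · intro l hl
    rw [partBlocks, List.mem_map] at hl
    obtain ⟨C, hC, rfl⟩ := hl
    exact C.nodup_toList
  · rw [partBlocks, List.pairwise_map]
    refine List.Pairwise.imp_of_mem ?_ (P.parts.nodup_toList)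
    intro C D hC hD hne x hxC hxD
    exact hne (P.eq_of_mem_parts (Finset.mem_toList.1 hC) (Finset.mem_toList.1 hD)
      (Finset.mem_toList.1 hxC) (Finset.mem_toList.1 hxD))

lemma mem_partBlocks_flatten (x : Fin n) : x ∈ (partBlocks P).flatten := by
  rw [partBlocks, List.mem_flatten]
  obtain ⟨C, hC, hx⟩ := P.exists_mem (Finset.mem_univ x)
  exact ⟨C.toList, List.mem_map_of_mem (Finset.mem_toList.2 hC), Finset.mem_toList.2 hx⟩

lemma partWord_eq : partWord P = ((partBlocks P).map (fun C => C ++ C)).flatten := by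
  rw [partWord, partBlocks, List.map_map]
  rfl

lemma mem_partWord (x : Fin n) : x ∈ partWord P := by
  rw [partWord, List.mem_flatten]
  obtain ⟨C, hC, hx⟩ := P.exists_mem (Finset.mem_univ x)
  exact ⟨C.toList ++ C.toList, List.mem_map_of_mem (Finset.mem_toList.2 hC),
    List.mem_append_left _ (Finset.mem_toList.2 hx)⟩

lemma partWord_klocal {k : ℕ} (hk : 1 < k) : KLocal k (partWord P) := by
  refine ⟨(partBlocks P).flatten, partBlocks_flatten_nodup P, ?_, ?_⟩
  · ext x
    simp only [List.mem_toFinset]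
    exact iff_of_true (mem_partBlocks_flatten P x) (mem_partWord P x)
  · intro i
    rw [partWord_eq, blockCount_eq_bcAux]
    calc bcAux false _ ≤ 1 + bcAux true _ := bcAux_false_le _
      _ ≤ 1 + 1 := Nat.add_le_add_left (key_le_one _ (partBlocks_flatten_nodup P) i) 1
      _ ≤ k := hk

lemma filter_partWord_same {C : Finset (Fin n)} (hC : C ∈ P.parts) {a b : Fin n}
    (ha : a ∈ C) (hb : b ∈ C) :
    (partWord P).filter (fun x => decide (x = a ∨ x = b)) =
      (C.toList ++ C.toList).filter (fun x => decide (x = a ∨ x = b)) := by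
  set q : Fin n → Bool := fun x => decide (x = a ∨ x = b) with hq
  obtain ⟨s, t, hst⟩ := List.append_of_mem (Finset.mem_toList.2 hC)
  have hnds := P.parts.nodup_toList
  rw [hst, List.nodup_append] at hnds
  have hCs : C ∉ s := fun hc => hnds.2.2 _ hc _ (List.mem_cons_self ..) rfl
  have hCt : C ∉ t := by
    have := hnds.2.1
    rw [List.nodup_cons] at this
    exact this.1
  have hnil : ∀ D ∈ s ++ t, ((D.toList ++ D.toList).filter q) = [] := by
    intro D hD
    have hDmem : D ∈ P.parts := by
      rw [← Finset.mem_toList, hst]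
      rcases List.mem_append.1 hD with h | h
      · exact List.mem_append_left _ h
      · exact List.mem_append_right _ (List.mem_cons_of_mem _ h)
    have hDC : D ≠ C := by
      rintro rfl
      rcases List.mem_append.1 hD with h | h
      · exact hCs h
      · exact hCt h
    rw [List.filter_eq_nil_iff]
    intro x hx
    have hxD : x ∈ D := Finset.mem_toList.1 (by simpa using (List.mem_append.1 hx).elim id id)
    simp only [hq, decide_eq_true_eq, not_or]
    constructor
    · rintro rfl
      exact hDC (P.eq_of_mem_parts hDmem hC hxD ha)
    · rintro rfl
      exact hDC (P.eq_of_mem_parts hDmem hC hxD hb)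
  rw [partWord, hst, List.map_append, List.map_cons, List.flatten_append, List.flatten_cons,
    List.filter_append, List.filter_append]
  have h1 : ((s.map (fun C => C.toList ++ C.toList)).flatten.filter q) = [] := by
    rw [List.filter_flatten, List.flatten_eq_nil_iff]
    intro l hl
    rw [List.map_map, List.mem_map] at hl
    obtain ⟨D, hD, rfl⟩ := hl
    exact hnil D (List.mem_append_left _ hD)
  have h2 : ((t.map (fun C => C.toList ++ C.toList)).flatten.filter q) = [] := by
    rw [List.filter_flatten, List.flatten_eq_nil_iff]
    intro l hl
    rw [List.map_map, List.mem_map] at hl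
    obtain ⟨D, hD, rfl⟩ := hl
    exact hnil D (List.mem_append_right _ hD)
  rw [h1, h2, List.nil_append, List.append_nil]

lemma chain_partWord_same {C : Finset (Fin n)} (hC : C ∈ P.parts) {a b : Fin n}
    (hab : a ≠ b) (ha : a ∈ C) (hb : b ∈ C) :
    ((partWord P).filter (fun x => decide (x = a ∨ x = b))).Chain' (· ≠ ·) := by
  set q : Fin n → Bool := fun x => decide (x = a ∨ x = b) with hq
  rw [filter_partWord_same P hC ha hb]
  set e := C.toList.filter q with he
  have hend : e.Nodup := C.nodup_toList.filter q
  have hae : a ∈ e := by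
    rw [he, List.mem_filter]
    exact ⟨Finset.mem_toList.2 ha, by simp [hq]⟩
  have hbe : b ∈ e := by
    rw [he, List.mem_filter]
    exact ⟨Finset.mem_toList.2 hb, by simp [hq]⟩
  have hsub : ∀ x ∈ e, x = a ∨ x = b := by
    intro x hx
    rw [he, List.mem_filter] at hx
    simpa [hq] using hx.2
  have hfin : e.toFinset = {a, b} := by
    ext x
    simp only [List.mem_toFinset, Finset.mem_insert, Finset.mem_singleton]
    exact ⟨hsub x, fun h => h.elim (fun h => h ▸ hae) (fun h => h ▸ hbe)⟩
  have hlen : e.length = 2 := by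
    rw [← List.toFinset_card_of_nodup hend, hfin, Finset.card_pair hab]
  obtain ⟨x, y, hxy⟩ := List.length_eq_two.1 hlen
  have hne : x ≠ y := by
    rw [hxy, List.nodup_cons] at hend
    simpa using hend.1
  rw [List.filter_append, ← he, hxy]
  simp [List.Chain', List.isChain_cons_cons, hne, hne.symm]

lemma not_chain_partWord_diff {C : Finset (Fin n)} (hC : C ∈ P.parts) {a b : Fin n}
    (ha : a ∈ C) (hb : b ∉ C) :
    ¬ ((partWord P).filter (fun x => decide (x = a ∨ x = b))).Chain' (· ≠ ·) := by
  set q : Fin n → Bool := fun x => decide (x = a ∨ x = b) with hq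
  have hfC : C.toList.filter q = [a] := by
    have : C.toList.filter q = C.toList.filter (fun x => decide (x = a)) := by
      apply List.filter_congr
      intro x hx
      have hxb : x ≠ b := fun h => hb (h ▸ Finset.mem_toList.1 hx)
      simp [hq, hxb]
    rw [this, List.filter_eq,
      List.count_eq_one_of_mem C.nodup_toList (Finset.mem_toList.2 ha)]
    rfl
  intro hch
  have hmem : [a, a] ∈ (P.parts.toList.map
      (fun C => (C.toList ++ C.toList).filter q)) := by
    rw [List.mem_map]
    exact ⟨C, Finset.mem_toList.2 hC, by rw [List.filter_append, hfC]; rfl⟩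
  have hinf : [a, a] <:+: (partWord P).filter q := by
    rw [partWord, List.filter_flatten, List.map_map]
    exact List.infix_of_mem_flatten hmem
  have := hch.infix hinf
  simp [List.isChain_cons_cons] at this

lemma partWord_represents : Represents (partWord P) Finset.univ (partGraph P) := by
  constructor
  · ext x
    simp [List.mem_toFinset, mem_partWord]
  · intro a b
    constructor
    · rintro ⟨hne, C, hC, ha, hb⟩
      exact ⟨hne, mem_partWord P a, mem_partWord P b, chain_partWord_same P hC hne ha hb⟩
    · rintro ⟨hne, -, -, hch⟩
      obtain ⟨C, hC, ha⟩ := P.exists_mem (Finset.mem_univ a)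
      by_cases hb : b ∈ C
      · exact ⟨hne, C, hC, ha, hb⟩
      · exact absurd hch (not_chain_partWord_diff P hC ha hb)

lemma partGraph_parts_subset {P Q : Finpartition (Finset.univ : Finset (Fin n))}
    (h : partGraph P = partGraph Q) : P.parts ⊆ Q.parts := by
  intro C hC
  obtain ⟨x, hx⟩ := P.nonempty_of_mem_parts hC
  have hCeq : C = Q.part x := by
    ext y
    by_cases hyx : y = x
    · subst hyx
      simp only [hx, true_iff]
      exact Q.mem_part (Finset.mem_univ y)
    · constructor
      · intro hy
        have hadj : (partGraph P).Adj x y := ⟨fun he => hyx he.symm, C, hC, hx, hy⟩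
        rw [h] at hadj
        obtain ⟨-, D, hD, hxD, hyD⟩ := hadj
        rwa [Q.eq_of_mem_parts hD (Q.part_mem.2 (Finset.mem_univ x)) hxD
          (Q.mem_part (Finset.mem_univ x))] at hyD
      · intro hy
        have hadj : (partGraph Q).Adj x y :=
          ⟨fun he => hyx he.symm, Q.part x, Q.part_mem.2 (Finset.mem_univ x),
            Q.mem_part (Finset.mem_univ x), hy⟩
        rw [← h] at hadj
        obtain ⟨-, D, hD, hxD, hyD⟩ := hadj
        rwa [P.eq_of_mem_parts hD hC hxD hx] at hyD
  rw [hCeq]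
  exact Q.part_mem.2 (Finset.mem_univ x)

lemma partGraph_injective :
    Function.Injective (partGraph : Finpartition (Finset.univ : Finset (Fin n)) → _) := by
  intro P Q h
  exact Finpartition.ext
    (Finset.Subset.antisymm (partGraph_parts_subset h) (partGraph_parts_subset h.symm))

end PartHelpers


/-- For `k > 1`, the number of graphs on `[n]` representable by `k`-local
words is at least the `n`-th Bell number (the number of partitions of `[n]`). -/
theorem stmt10 (k n : ℕ) (hk : 1 < k) :
    Nat.card (Finpartition (Finset.univ : Finset (Fin n))) ≤
      Nat.card {G : SimpleGraph (Fin n) //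
        ∃ w : List (Fin n), KLocal k w ∧ Represents w Finset.univ G} := by
  refine Nat.card_le_card_of_injective
    (fun P => ⟨partGraph P, partWord P, partWord_klocal P hk, partWord_represents P⟩) ?_
  intro P Q h
  exact partGraph_injective (congrArg Subtype.val h)
end
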